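/- If P ∈ SBrNDC, P' ∈ reach(P), and P'/A_H ⟹τ* P''/A_H (i.e., P''/A_H is reachable from P'/A_H via finitely many τ-transitions), then there exists P̂'' such that P'∖A_H ⟹τ* P̂''∖A_H and P''∖A_H ≈_b P̂''∖A_H. -/
import Mathlib


namespace SecurityNI

/-- Process terms: `0`, action prefix (`none` = τ, `some a` = observable action),
choice, CSP-style parallel composition with synchronization set, restriction,
hiding, and constants (whose defining equations are given by an environment). -/
inductive Proc (A : Type) (C : Type) : Type where
  | nil : Proc A C
  | pre : Option A → Proc A C → Proc A C
  | choice : Proc A C → Proc A C → Proc A C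
  | par : Set A → Proc A C → Proc A C → Proc A C
  | restrict : Proc A C → Set A → Proc A C
  | hide : Proc A C → Set A → Proc A C
  | const : C → Proc A C

variable {A C : Type}

/-- A process term is guarded when every constant occurrence is in the scope
of an action prefix operator. -/
def Guarded : Proc A C → Prop
  | .nil => True
  | .pre _ _ => True
  | .choice p q => Guarded p ∧ Guarded q
  | .par _ p q => Guarded p ∧ Guarded q
  | .restrict p _ => Guarded p
  | .hide p _ => Guarded p
  | .const _ => False

/-- Operational semantics, parameterized by the defining equations `env` of
the constants.  Labels are `Option A`, with `none` playing the role of τ. -/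
inductive Trans (env : C → Proc A C) : Proc A C → Option A → Proc A C → Prop where
  | pre (a : Option A) (p : Proc A C) : Trans env (.pre a p) a p
  | choiceL {p q a p'} (h : Trans env p a p') : Trans env (.choice p q) a p'
  | choiceR {p q a q'} (h : Trans env q a q') : Trans env (.choice p q) a q'
  | parL {L p q a p'} (h : Trans env p a p') (hn : ∀ x, a = some x → x ∉ L) :
      Trans env (.par L p q) a (.par L p' q)
  | parR {L p q a q'} (h : Trans env q a q') (hn : ∀ x, a = some x → x ∉ L) :
      Trans env (.par L p q) a (.par L p q')
  | sync {L p q x p' q'} (h1 : Trans env p (some x) p') (h2 : Trans env q (some x) q')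
      (hx : x ∈ L) : Trans env (.par L p q) (some x) (.par L p' q')
  | res {p a p' L} (h : Trans env p a p') (hn : ∀ x, a = some x → x ∉ L) :
      Trans env (.restrict p L) a (.restrict p' L)
  | hideIn {p x p' L} (h : Trans env p (some x) p') (hx : x ∈ L) :
      Trans env (.hide p L) none (.hide p' L)
  | hideOut {p a p' L} (h : Trans env p a p') (hn : ∀ x, a = some x → x ∉ L) :
      Trans env (.hide p L) a (.hide p' L)
  | const {c a p'} (h : Trans env (env c) a p') : Trans env (.const c) a p'

section LTS

variable {S : Type} (tr : S → Option A → S → Prop)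

/-- Finitely many (possibly zero) τ-transitions. -/
def TauStar : S → S → Prop :=
  Relation.ReflTransGen (fun s s' => tr s none s')

/-- `B` is a branching bisimulation. -/
def IsBranchingBisim (B : S → S → Prop) : Prop :=
  Symmetric B ∧
    ∀ s1 s2, B s1 s2 → ∀ a s1', tr s1 a s1' →
      (a = none ∧ B s1' s2) ∨
      (∃ s2b s2', TauStar tr s2 s2b ∧ tr s2b a s2' ∧ B s1 s2b ∧ B s1' s2')

/-- Branching bisimilarity `≈_b`. -/
def BrBisim (s1 s2 : S) : Prop :=
  ∃ B, IsBranchingBisim tr B ∧ B s1 s2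

/-- `B` is a weak bisimulation. -/
def IsWeakBisim (B : S → S → Prop) : Prop :=
  Symmetric B ∧
    ∀ s1 s2, B s1 s2 →
      (∀ s1', tr s1 none s1' → ∃ s2', TauStar tr s2 s2' ∧ B s1' s2') ∧
      (∀ x s1', tr s1 (some x) s1' →
        ∃ t t' s2', TauStar tr s2 t ∧ tr t (some x) t' ∧ TauStar tr t' s2' ∧ B s1' s2')

/-- Weak bisimilarity `≈`. -/
def WeakBisim (s1 s2 : S) : Prop :=
  ∃ B, IsWeakBisim tr B ∧ B s1 s2

/-- Reachability via finitely many transitions. -/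
def Reach : S → S → Prop :=
  Relation.ReflTransGen (fun s s' => ∃ a, tr s a s')

end LTS

section Security

variable (env : C → Proc A C) (AH : Set A)

/-- `P ∈ BrSNNI` iff `P∖A_H ≈_b P/A_H`. -/
def BrSNNI (p : Proc A C) : Prop :=
  BrBisim (Trans env) (.restrict p AH) (.hide p AH)

/-- All processes reachable from `q` perform only actions in `AH`. -/
def HighOnly (q : Proc A C) : Prop :=
  ∀ q', Reach (Trans env) q q' → ∀ a q'', Trans env q' a q'' → ∃ h ∈ AH, a = some h

/-- `P ∈ BrNDC` iff `P∖A_H ≈_b ((P ∥_L Q)/L)∖A_H` for every high-level `Q`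
and every `L ⊆ A_H`. -/
def BrNDC (p : Proc A C) : Prop :=
  ∀ q, HighOnly env AH q → ∀ L, L ⊆ AH →
    BrBisim (Trans env) (.restrict p AH) (.restrict (.hide (.par L p q) L) AH)

/-- `P ∈ SBrSNNI` iff every reachable process is BrSNNI. -/
def SBrSNNI (p : Proc A C) : Prop :=
  ∀ p', Reach (Trans env) p p' → BrSNNI env AH p'

/-- `P ∈ P_BrNDC` iff every reachable process is BrNDC. -/
def PBrNDC (p : Proc A C) : Prop :=
  ∀ p', Reach (Trans env) p p' → BrNDC env AH p'

/-- `P ∈ SBrNDC` iff for every reachable `P'` and every high transition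
`P' --h→ P''`, `P'∖A_H ≈_b P''∖A_H`. -/
def SBrNDC (p : Proc A C) : Prop :=
  ∀ p' p'', Reach (Trans env) p p' → ∀ h ∈ AH, Trans env p' (some h) p'' →
    BrBisim (Trans env) (.restrict p' AH) (.restrict p'' AH)

/-- `P ∈ BSNNI` iff `P∖A_H ≈ P/A_H`. -/
def BSNNI (p : Proc A C) : Prop :=
  WeakBisim (Trans env) (.restrict p AH) (.hide p AH)

/-- `P ∈ BNDC` iff `P∖A_H ≈ ((P ∥_L Q)/L)∖A_H` for every high-level `Q`
and every `L ⊆ A_H`. -/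
def BNDC (p : Proc A C) : Prop :=
  ∀ q, HighOnly env AH q → ∀ L, L ⊆ AH →
    WeakBisim (Trans env) (.restrict p AH) (.restrict (.hide (.par L p q) L) AH)

/-- `P ∈ SBSNNI` iff every reachable process is BSNNI. -/
def SBSNNI (p : Proc A C) : Prop :=
  ∀ p', Reach (Trans env) p p' → BSNNI env AH p'

/-- `P ∈ P_BNDC` iff every reachable process is BNDC. -/
def PBNDC (p : Proc A C) : Prop :=
  ∀ p', Reach (Trans env) p p' → BNDC env AH p'

/-- `P ∈ SBNDC` iff for every reachable `P'` and every high transition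
`P' --h→ P''`, `P'∖A_H ≈ P''∖A_H`. -/
def SBNDC (p : Proc A C) : Prop :=
  ∀ p' p'', Reach (Trans env) p p' → ∀ h ∈ AH, Trans env p' (some h) p'' →
    WeakBisim (Trans env) (.restrict p' AH) (.restrict p'' AH)

/-- No high-level actions occur in `p`: no process reachable from `p`
can perform a high-level action. -/
def NoHigh (p : Proc A C) : Prop :=
  ∀ p', Reach (Trans env) p p' → ∀ h ∈ AH, ∀ p'', ¬ Trans env p' (some h) p''

end Security

section SemiTheory

variable {S : Type} (tr : S → Option A → S → Prop)

/-- Semi-branching bisimulation (Basten). -/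
def IsSemi (B : S → S → Prop) : Prop :=
  Symmetric B ∧
    ∀ s1 s2, B s1 s2 → ∀ a s1', tr s1 a s1' →
      (a = none ∧ ∃ s2', TauStar tr s2 s2' ∧ B s1 s2' ∧ B s1' s2') ∨
      (∃ s2b s2', TauStar tr s2 s2b ∧ tr s2b a s2' ∧ B s1 s2b ∧ B s1' s2')

def Semi (s1 s2 : S) : Prop := ∃ B, IsSemi tr B ∧ B s1 s2

variable {tr}

lemma br_isSemi {B : S → S → Prop} (h : IsBranchingBisim tr B) : IsSemi tr B := by
  refine ⟨h.1, fun s1 s2 hB a s1' htr => ?_⟩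
  rcases h.2 s1 s2 hB a s1' htr with ⟨rfl, h'⟩ | ⟨s2b, s2', h1, h2, h3, h4⟩
  · exact Or.inl ⟨rfl, s2, Relation.ReflTransGen.refl, hB, h'⟩
  · exact Or.inr ⟨s2b, s2', h1, h2, h3, h4⟩

lemma semi_symm {s t : S} (h : Semi tr s t) : Semi tr t s := by
  rcases h with ⟨B, hB, h⟩; exact ⟨B, hB, hB.1 h⟩

lemma semi_refl (s : S) : Semi tr s s := by
  refine ⟨Eq, ⟨fun _ _ h => h.symm, fun s1 s2 hB a s1' htr => ?_⟩, rfl⟩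
  subst hB
  exact Or.inr ⟨s1, s1', Relation.ReflTransGen.refl, htr, rfl, rfl⟩

lemma isSemi_semi : IsSemi tr (Semi tr) := by
  constructor
  · exact fun _ _ h => semi_symm h
  · rintro s1 s2 ⟨B, hB, h⟩ a s1' htr
    rcases hB.2 s1 s2 h a s1' htr with ⟨rfl, s2', h1, h2, h3⟩ | ⟨s2b, s2', h1, h2, h3, h4⟩
    · exact Or.inl ⟨rfl, s2', h1, ⟨B, hB, h2⟩, ⟨B, hB, h3⟩⟩
    · exact Or.inr ⟨s2b, s2', h1, h2, ⟨B, hB, h3⟩, ⟨B, hB, h4⟩⟩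

lemma semi_taustar {B : S → S → Prop} (hB : IsSemi tr B) {t u t' : S}
    (h : B t u) (hts : TauStar tr t t') : ∃ u', TauStar tr u u' ∧ B t' u' := by
  induction hts with
  | refl => exact ⟨u, Relation.ReflTransGen.refl, h⟩
  | tail _ hstep ih =>
    rcases ih with ⟨u', hu', hBu'⟩
    rcases hB.2 _ _ hBu' none _ hstep with ⟨_, u'', h1, _, h3⟩ | ⟨ub, u'', h1, h2, _, h4⟩
    · exact ⟨u'', hu'.trans h1, h3⟩
    · exact ⟨u'', (hu'.trans h1).tail h2, h4⟩

lemma semi_trans {x y z : S} (hxy : Semi tr x y) (hyz : Semi tr y z) : Semi tr x z := by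
  set B : S → S → Prop := fun a b => Semi tr a b ∨ ∃ c, Semi tr a c ∧ Semi tr c b with hBdef
  have hB : IsSemi tr B := by
    constructor
    · rintro a b (h | ⟨c, h1, h2⟩)
      · exact Or.inl (semi_symm h)
      · exact Or.inr ⟨c, semi_symm h2, semi_symm h1⟩
    · rintro s1 s2 (h | ⟨c, h1, h2⟩) a s1' htr
      · rcases isSemi_semi.2 s1 s2 h a s1' htr with ⟨rfl, s2', k1, k2, k3⟩ |
          ⟨s2b, s2', k1, k2, k3, k4⟩
        · exact Or.inl ⟨rfl, s2', k1, Or.inl k2, Or.inl k3⟩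
        · exact Or.inr ⟨s2b, s2', k1, k2, Or.inl k3, Or.inl k4⟩
      · rcases isSemi_semi.2 s1 c h1 a s1' htr with ⟨rfl, c', k1, k2, k3⟩ |
          ⟨cb, c', k1, k2, k3, k4⟩
        · rcases semi_taustar isSemi_semi h2 k1 with ⟨z', hz', hcz'⟩
          exact Or.inl ⟨rfl, z', hz', Or.inr ⟨c', k2, hcz'⟩, Or.inr ⟨c', k3, hcz'⟩⟩
        · rcases semi_taustar isSemi_semi h2 k1 with ⟨zm, hzm, hczm⟩
          rcases isSemi_semi.2 cb zm hczm a c' k2 with ⟨rfl, z', m1, m2, m3⟩ |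
            ⟨zb, z', m1, m2, m3, m4⟩
          · exact Or.inl ⟨rfl, z', hzm.trans m1, Or.inr ⟨cb, k3, m2⟩, Or.inr ⟨c', k4, m3⟩⟩
          · exact Or.inr ⟨zb, z', hzm.trans m1, m2, Or.inr ⟨cb, k3, m3⟩, Or.inr ⟨c', k4, m4⟩⟩
  exact ⟨B, hB, Or.inr ⟨y, hxy, hyz⟩⟩

lemma semi_stutter {s t v w : S} (hst : Semi tr s t) (hsv : TauStar tr s v)
    (hvw : TauStar tr v w) (hwt : Semi tr w t) : Semi tr v t := by
  set B : S → S → Prop := fun x y =>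
    Semi tr x y ∨ (x = v ∧ y = t) ∨ (x = t ∧ y = v) with hBdef
  have hB : IsSemi tr B := by
    constructor
    · rintro a b (h | ⟨rfl, rfl⟩ | ⟨rfl, rfl⟩)
      · exact Or.inl (semi_symm h)
      · exact Or.inr (Or.inr ⟨rfl, rfl⟩)
      · exact Or.inr (Or.inl ⟨rfl, rfl⟩)
    · rintro s1 s2 (h | ⟨rfl, rfl⟩ | ⟨rfl, rfl⟩) a s1' htr
      · rcases isSemi_semi.2 s1 s2 h a s1' htr with ⟨rfl, s2', k1, k2, k3⟩ |
          ⟨s2b, s2', k1, k2, k3, k4⟩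
        · exact Or.inl ⟨rfl, s2', k1, Or.inl k2, Or.inl k3⟩
        · exact Or.inr ⟨s2b, s2', k1, k2, Or.inl k3, Or.inl k4⟩
      · -- pair (v, t), transition v --a→ s1'
        rcases semi_taustar isSemi_semi hst hsv with ⟨w0, hw0, hvw0⟩
        rcases isSemi_semi.2 _ _ hvw0 a s1' htr with ⟨rfl, w0', k1, k2, k3⟩ |
          ⟨wb, w', k1, k2, k3, k4⟩
        · exact Or.inl ⟨rfl, w0', hw0.trans k1, Or.inl k2, Or.inl k3⟩
        · exact Or.inr ⟨wb, w', hw0.trans k1, k2, Or.inl k3, Or.inl k4⟩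
      · -- pair (t, v), transition t --a→ s1'
        rcases isSemi_semi.2 _ _ (semi_symm hwt) a s1' htr with ⟨rfl, w', k1, k2, k3⟩ |
          ⟨wb, w', k1, k2, k3, k4⟩
        · exact Or.inl ⟨rfl, w', hvw.trans k1, Or.inl k2, Or.inl k3⟩
        · exact Or.inr ⟨wb, w', hvw.trans k1, k2, Or.inl k3, Or.inl k4⟩
  exact ⟨B, hB, Or.inr (Or.inl ⟨rfl, rfl⟩)⟩

lemma isBranching_semi : IsBranchingBisim tr (Semi tr) := by
  constructor
  · exact fun _ _ h => semi_symm h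
  · intro s1 s2 h a s1' htr
    rcases isSemi_semi.2 s1 s2 h a s1' htr with ⟨rfl, s2', k1, k2, k3⟩ |
      ⟨s2b, s2', k1, k2, k3, k4⟩
    · rcases (Relation.ReflTransGen.cases_tail k1) with rfl | ⟨u, hu, hstep⟩
      · exact Or.inl ⟨rfl, k3⟩
      · refine Or.inr ⟨u, s2', hu, hstep, ?_, k3⟩
        have : Semi tr u s1 :=
          semi_stutter (semi_symm h) hu (Relation.ReflTransGen.single hstep) (semi_symm k2)
        exact semi_symm this
    · exact Or.inr ⟨s2b, s2', k1, k2, k3, k4⟩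

lemma semi_to_br {s t : S} (h : Semi tr s t) : BrBisim tr s t :=
  ⟨Semi tr, isBranching_semi, h⟩

lemma br_to_semi {s t : S} (h : BrBisim tr s t) : Semi tr s t := by
  rcases h with ⟨B, hB, h⟩; exact ⟨B, br_isSemi hB, h⟩

end SemiTheory

section Inversion

variable {env : C → Proc A C}

lemma hide_inv {p : Proc A C} {L : Set A} {a : Option A} {s : Proc A C}
    (h : Trans env (.hide p L) a s) :
    ∃ p', s = .hide p' L ∧
      ((a = none ∧ ∃ x ∈ L, Trans env p (some x) p') ∨
       (Trans env p a p' ∧ ∀ x, a = some x → x ∉ L)) := by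
  cases h with
  | hideIn h hx => exact ⟨_, rfl, Or.inl ⟨rfl, _, hx, h⟩⟩
  | hideOut h hn => exact ⟨_, rfl, Or.inr ⟨h, hn⟩⟩

lemma restrict_inv {p : Proc A C} {L : Set A} {a : Option A} {s : Proc A C}
    (h : Trans env (.restrict p L) a s) :
    ∃ p', s = .restrict p' L ∧ Trans env p a p' ∧ ∀ x, a = some x → x ∉ L := by
  cases h with
  | res h hn => exact ⟨_, rfl, h, hn⟩

lemma restrict_taustar_shape {p : Proc A C} {L : Set A} {s : Proc A C}
    (h : TauStar (Trans env) (.restrict p L) s) : ∃ q, s = .restrict q L := by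
  induction h with
  | refl => exact ⟨p, rfl⟩
  | tail _ hstep ih =>
    rcases ih with ⟨q, rfl⟩
    rcases restrict_inv hstep with ⟨q', rfl, _, _⟩
    exact ⟨q', rfl⟩

lemma res_tau {p p' : Proc A C} {L : Set A} (h : Trans env p none p') :
    Trans env (.restrict p L) none (.restrict p' L) :=
  Trans.res h (fun _ hx => nomatch hx)

end Inversion

lemma sbrndc_aux {A C : Type} (env : C → Proc A C) (AH : Set A) (P : Proc A C)
    (hP : SBrNDC env AH P) (Q'' : Proc A C) :
    ∀ s t, TauStar (Trans env) s t → t = .hide Q'' AH →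
      ∀ Q, s = .hide Q AH → Reach (Trans env) P Q →
      ∃ Phat, TauStar (Trans env) (.restrict Q AH) (.restrict Phat AH) ∧
        Semi (Trans env) (.restrict Q'' AH) (.restrict Phat AH) := by
  intro s t htau ht
  induction htau using Relation.ReflTransGen.head_induction_on with
  | refl =>
    rintro Q hQ hreach
    subst ht
    cases hQ
    exact ⟨Q'', Relation.ReflTransGen.refl, semi_refl _⟩
  | head hstep _ ih =>
    rintro Q rfl hreach
    rcases hide_inv hstep with ⟨Q1, rfl, hcase⟩
    have hreach1 : Reach (Trans env) P Q1 := by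
      rcases hcase with ⟨_, x, _, h⟩ | ⟨h, _⟩
      · exact hreach.tail ⟨some x, h⟩
      · exact hreach.tail ⟨none, h⟩
    rcases ih Q1 rfl hreach1 with ⟨Phat1, hts1, hsemi1⟩
    rcases hcase with ⟨_, x, hxAH, hQx⟩ | ⟨hQτ, _⟩
    · -- high step Q --x→ Q1 with x ∈ AH
      have hbb : BrBisim (Trans env) (.restrict Q AH) (.restrict Q1 AH) :=
        hP Q Q1 hreach x hxAH hQx
      have hQQ1 : Semi (Trans env) (.restrict Q1 AH) (.restrict Q AH) :=
        semi_symm (br_to_semi hbb)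
      rcases semi_taustar isSemi_semi hQQ1 hts1 with ⟨w, hw, hPw⟩
      rcases restrict_taustar_shape hw with ⟨R, rfl⟩
      exact ⟨R, hw, semi_trans hsemi1 hPw⟩
    · -- low (τ) step Q --τ→ Q1
      exact ⟨Phat1, Relation.ReflTransGen.head (res_tau hQτ) hts1, hsemi1⟩

/-- Lemma 4.6(1). -/
theorem sbrndc_tau_star_transfer {A C : Type} (env : C → Proc A C)
    (hguard : ∀ c, Guarded (env c)) (AH : Set A) (P : Proc A C)
    (hP : SBrNDC env AH P) (P' P'' : Proc A C)
    (hreach : Reach (Trans env) P P')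
    (htau : TauStar (Trans env) (Proc.hide P' AH) (Proc.hide P'' AH)) :
    ∃ Phat : Proc A C,
      TauStar (Trans env) (Proc.restrict P' AH) (Proc.restrict Phat AH) ∧
      BrBisim (Trans env) (Proc.restrict P'' AH) (Proc.restrict Phat AH) := by
  rcases sbrndc_aux env AH P hP P'' _ _ htau rfl P' rfl hreach with ⟨Phat, h1, h2⟩
  exact ⟨Phat, h1, semi_to_br h2⟩

end SecurityNI
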